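/- The dual unit curve v(θ) = u'(θ)/[u(θ),u'(θ)] satisfies [v(θ),v'(θ)] > 0 for all θ; i.e., v is a curve with strictly positive curvature in its parameterization. -/

import Mathlib

open Real

/-- Determinant of two plane vectors. -/
noncomputable def det2 (w₁ w₂ : ℝ × ℝ) : ℝ := w₁.1 * w₂.2 - w₁.2 * w₂.1

/-- The dual curve v = u'/[u,u'] satisfies [v,v'] > 0. -/
theorem dual_positive_curvature (u u' u'' v : ℝ → ℝ × ℝ)
    (hu : ∀ θ, HasDerivAt u (u' θ) θ)
    (hu' : ∀ θ, HasDerivAt u' (u'' θ) θ)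
    (hdet : ∀ θ, 0 < det2 (u θ) (u' θ))
    (hcurv : ∀ θ, 0 < det2 (u' θ) (u'' θ))
    (hv : ∀ θ, v θ = (det2 (u θ) (u' θ))⁻¹ • u' θ) :
    ∀ θ, 0 < det2 (v θ) (deriv v θ) := by
  intro θ
  -- notation for components
  set p : ℝ → ℝ := fun t => (u t).1 * (u' t).2 - (u t).2 * (u' t).1 with hp
  have hpdet : ∀ t, p t = det2 (u t) (u' t) := fun t => rfl
  have hppos : ∀ t, 0 < p t := fun t => hdet t
  have hu1 : ∀ t, HasDerivAt (fun s => (u s).1) (u' t).1 t := fun t =>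
    (hu t).fst
  have hu2 : ∀ t, HasDerivAt (fun s => (u s).2) (u' t).2 t := fun t =>
    (hu t).snd
  have hu'1 : ∀ t, HasDerivAt (fun s => (u' s).1) (u'' t).1 t := fun t =>
    (hu' t).fst
  have hu'2 : ∀ t, HasDerivAt (fun s => (u' s).2) (u'' t).2 t := fun t =>
    (hu' t).snd
  -- derivative of p
  have hpd : ∀ t, HasDerivAt p ((u t).1 * (u'' t).2 - (u t).2 * (u'' t).1) t := by
    intro t
    have h := (((hu1 t).mul (hu'2 t)).sub ((hu2 t).mul (hu'1 t)))
    refine h.congr_deriv ?_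
    ring
  -- derivative of v components
  have hvfun : v = fun t => ((p t)⁻¹ * (u' t).1, (p t)⁻¹ * (u' t).2) := by
    funext t
    rw [hv t]
    rfl
  set p' : ℝ → ℝ := fun t => (u t).1 * (u'' t).2 - (u t).2 * (u'' t).1 with hp'
  have hv1 : HasDerivAt (fun s => (p s)⁻¹ * (u' s).1)
      (-(p' θ) / (p θ)^2 * (u' θ).1 + (p θ)⁻¹ * (u'' θ).1) θ := by
    have hinv : HasDerivAt (fun s => (p s)⁻¹) (-(p' θ) / (p θ)^2) θ :=
      (hpd θ).inv (ne_of_gt (hppos θ))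
    exact hinv.mul (hu'1 θ)
  have hv2 : HasDerivAt (fun s => (p s)⁻¹ * (u' s).2)
      (-(p' θ) / (p θ)^2 * (u' θ).2 + (p θ)⁻¹ * (u'' θ).2) θ := by
    have hinv : HasDerivAt (fun s => (p s)⁻¹) (-(p' θ) / (p θ)^2) θ :=
      (hpd θ).inv (ne_of_gt (hppos θ))
    exact hinv.mul (hu'2 θ)
  have hvd : HasDerivAt v
      ((-(p' θ) / (p θ)^2 * (u' θ).1 + (p θ)⁻¹ * (u'' θ).1,
        -(p' θ) / (p θ)^2 * (u' θ).2 + (p θ)⁻¹ * (u'' θ).2)) θ := by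
    rw [hvfun]
    exact hv1.prodMk hv2
  rw [hvd.deriv, hvfun]
  show 0 < ((p θ)⁻¹ * (u' θ).1) * (-(p' θ) / (p θ)^2 * (u' θ).2 + (p θ)⁻¹ * (u'' θ).2)
      - ((p θ)⁻¹ * (u' θ).2) * (-(p' θ) / (p θ)^2 * (u' θ).1 + (p θ)⁻¹ * (u'' θ).1)
  have hP := hppos θ
  have hC := hcurv θ
  have hC' : 0 < (u' θ).1 * (u'' θ).2 - (u' θ).2 * (u'' θ).1 := hC
  have hPne : p θ ≠ 0 := ne_of_gt hP
  have : ((p θ)⁻¹ * (u' θ).1) * (-(p' θ) / (p θ)^2 * (u' θ).2 + (p θ)⁻¹ * (u'' θ).2)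
      - ((p θ)⁻¹ * (u' θ).2) * (-(p' θ) / (p θ)^2 * (u' θ).1 + (p θ)⁻¹ * (u'' θ).1)
      = ((u' θ).1 * (u'' θ).2 - (u' θ).2 * (u'' θ).1) / (p θ)^2 := by
    field_simp
    ring
  rw [this]
  positivity
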